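/- Let α, β, ν, λ, μ, q, h, σ be real numbers with λ ≠ 0. Let t′, r′ be real numbers with r′ ≠ 0 and D := q + h·t′ + σ·r′ ≠ 0, and set r := λ·r′/D and t := μ·t′/D. Then r ≠ 0 and (α + β·t + ν·r)² / r² = (α·q + (α·h + β·μ)·t′ + (α·σ + ν·λ)·r′)² / (λ²·r′²). In particular there exist real numbers α′, β′, ν′ (namely α′ = α·q/λ, β′ = (α·h + β·μ)/λ, ν′ = (α·σ + ν·λ)/λ) such that (α + β·t + ν·r)²/r² = (α′ + β′·t′ + ν′·r′)²/r′². -/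

import Mathlib

/-- equivariance of the modified Newton law under central collineations.
With `r = λ·r′/D`, `t = μ·t′/D`, `D = q + h·t′ + σ·r′ ≠ 0`, `λ ≠ 0`, `r′ ≠ 0`, one has
`r ≠ 0` and `(α + β·t + ν·r)²/r² = (α′ + β′·t′ + ν′·r′)²/r′²` with
`α′ = α·q/λ`, `β′ = (α·h + β·μ)/λ`, `ν′ = (α·σ + ν·λ)/λ`. -/
theorem modified_newton_equivariance (α β ν lam μ q h σ t' r' : ℝ)
    (hlam : lam ≠ 0) (hr' : r' ≠ 0) (hD : q + h * t' + σ * r' ≠ 0)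
    (r t : ℝ) (hr : r = lam * r' / (q + h * t' + σ * r'))
    (ht : t = μ * t' / (q + h * t' + σ * r')) :
    r ≠ 0 ∧
    (α + β * t + ν * r) ^ 2 / r ^ 2
      = (α * q + (α * h + β * μ) * t' + (α * σ + ν * lam) * r') ^ 2 / (lam ^ 2 * r' ^ 2) ∧
    ∃ α' β' ν' : ℝ, α' = α * q / lam ∧ β' = (α * h + β * μ) / lam ∧
      ν' = (α * σ + ν * lam) / lam ∧
      (α + β * t + ν * r) ^ 2 / r ^ 2 = (α' + β' * t' + ν' * r') ^ 2 / r' ^ 2 := by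
  subst hr ht
  refine ⟨div_ne_zero (mul_ne_zero hlam hr') hD, ?_, ?_⟩
  · field_simp
    rw [mul_comm t' h]
    field_simp
    ring
  · refine ⟨_, _, _, rfl, rfl, rfl, ?_⟩
    field_simp
    rw [mul_comm t' h]
    field_simp
    ring
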